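/- If all data vectors are identical and nonzero, i.e. x_1 = x_2 = … = x_n = x with x ≠ 0 (so that R2/R1 = n−1), and n ≥ 2, 1 ≤ k < d, then the identity scaling function T(m) = m (the Rand-k-Spatial(Max) estimator) minimizes the mean squared error within the Rand-k-Spatial family: for every T : {1,…,n} → (0,∞), E[||x̂^{T(m)=m} − x̄||²] ≤ E[||x̂^{T} − x̄||²]. -/

import Mathlib

open Finset

noncomputable section

/-- A size-`k` subset of the coordinate set `{1,…,d}`. -/
abbrev KSub (d k : ℕ) := {S : Finset (Fin d) // S.card = k}

/-- Sample space: each of the `n` nodes independently picks a uniformly random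
size-`k` subset of coordinates. -/
abbrev Omega (n d k : ℕ) := Fin n → KSub d k

/-- Expectation with respect to the uniform distribution on `Omega n d k`
(each `n`-tuple of `k`-subsets has probability `1 / C(d,k)^n`). -/
def Exp {n d k : ℕ} (f : Omega n d k → ℝ) : ℝ :=
  (∑ ω : Omega n d k, f ω) / (Fintype.card (Omega n d k) : ℝ)

/-- The sparsified vector of node `i`: `h_{ij} = x_{ij}` if `j ∈ S_i`, else `0`. -/
def spars {n d k : ℕ} (x : Fin n → Fin d → ℝ) (ω : Omega n d k) (i : Fin n) (j : Fin d) : ℝ :=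
  if j ∈ (ω i).1 then x i j else 0

/-- The per-coordinate sampling probability `p = k/d`. -/
def pr (d k : ℕ) : ℝ := (k : ℝ) / (d : ℝ)

/-- `M_j`: the number of nodes that send coordinate `j`. -/
def Mcount {n d k : ℕ} (ω : Omega n d k) (j : Fin d) : ℕ :=
  (Finset.univ.filter fun i : Fin n => j ∈ (ω i).1).card

/-- The normalizing constant
`β̄ = ( Σ_{m=1}^n (p/T(m))·C(n−1,m−1)·p^{m−1}·(1−p)^{n−m} )⁻¹`. -/
def betaBar (n d k : ℕ) (T : ℕ → ℝ) : ℝ :=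
  (∑ m ∈ Finset.Icc 1 n,
      (pr d k / T m) * ((n - 1).choose (m - 1) : ℝ) * pr d k ^ (m - 1)
        * (1 - pr d k) ^ (n - m))⁻¹

/-- The Rand-k-Spatial estimate of coordinate `j` of the mean:
`x̂_j = (1/n)·(β̄/T(M_j))·Σᵢ h_{ij}` when `M_j ≥ 1`, and `x̂_j = 0` when `M_j = 0`. -/
def spatialEst {n d k : ℕ} (x : Fin n → Fin d → ℝ) (T : ℕ → ℝ) (ω : Omega n d k)
    (j : Fin d) : ℝ :=
  if 1 ≤ Mcount ω j then
    (1 / (n : ℝ)) * (betaBar n d k T / T (Mcount ω j)) * ∑ i : Fin n, spars x ω i j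
  else 0

/-- The mean squared error `E[‖x̂ᵀ − x̄‖²]` of the Rand-k-Spatial estimator with
scaling function `T`. -/
def mseSpatial (n d k : ℕ) (x : Fin n → Fin d → ℝ) (T : ℕ → ℝ) : ℝ :=
  Exp (fun ω : Omega n d k =>
    ∑ j : Fin d, (spatialEst x T ω j - (1 / (n : ℝ)) * ∑ i : Fin n, x i j) ^ 2)

-- counting the fiber
lemma fiber_count {α : Type*} [Fintype α] [DecidableEq α] (P : α → Prop) [DecidablePred P]
    (n : ℕ) (A : Finset (Fin n)) :
    ((univ : Finset (Fin n → α)).filter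
        (fun ω => (univ.filter fun i => P (ω i)) = A)).card
      = (univ.filter P).card ^ A.card * (univ.filter fun s => ¬ P s).card ^ (n - A.card) := by
  have h : ((univ : Finset (Fin n → α)).filter
        (fun ω => (univ.filter fun i => P (ω i)) = A))
      = Fintype.piFinset (fun i => if i ∈ A then univ.filter P else univ.filter fun s => ¬ P s) := by
    ext ω
    simp only [mem_filter, mem_univ, true_and, Fintype.mem_piFinset, Finset.ext_iff]
    constructor
    · intro h i
      have := h i
      by_cases hi : i ∈ A <;> simp [hi, mem_filter] at this ⊢ <;> tauto
    · intro h i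
      have := h i
      by_cases hi : i ∈ A <;> simp [hi, mem_filter] at this ⊢ <;> tauto
  rw [h, Fintype.card_piFinset]
  rw [← Finset.prod_mul_prod_compl A]
  have h1 : ∀ i ∈ A, (if i ∈ A then univ.filter P else univ.filter fun s => ¬ P s).card
      = (univ.filter P).card := by intro i hi; rw [if_pos hi]
  have h2 : ∀ i ∈ Aᶜ, (if i ∈ A then univ.filter P else univ.filter fun s => ¬ P s).card
      = (univ.filter fun s => ¬ P s).card := by
    intro i hi; rw [if_neg (by simpa using hi)]
  rw [Finset.prod_congr rfl h1, Finset.prod_congr rfl h2, Finset.prod_const, Finset.prod_const,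
    Finset.card_compl, Fintype.card_fin]

lemma sum_binom {α : Type*} [Fintype α] [DecidableEq α] (P : α → Prop) [DecidablePred P]
    (n : ℕ) (F : ℕ → ℝ) :
    ∑ ω : Fin n → α, F ((univ.filter fun i => P (ω i)).card)
      = ∑ m ∈ range (n+1), (n.choose m : ℝ) * (univ.filter P).card ^ m
          * (univ.filter fun s => ¬ P s).card ^ (n - m) * F m := by
  classical
  have hmaps : ∀ ω ∈ (univ : Finset (Fin n → α)),
      (univ.filter fun i => P (ω i)) ∈ (univ : Finset (Fin n)).powerset := by
    intro ω _; exact mem_powerset.2 (subset_univ _)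
  rw [← Finset.sum_fiberwise_of_maps_to hmaps
    (fun ω => F ((univ.filter fun i => P (ω i)).card))]
  have hinner : ∀ A ∈ (univ : Finset (Fin n)).powerset,
      (∑ ω ∈ (univ : Finset (Fin n → α)).filter
          (fun ω => (univ.filter fun i => P (ω i)) = A),
        F ((univ.filter fun i => P (ω i)).card))
      = ((univ.filter P).card ^ A.card * (univ.filter fun s => ¬ P s).card ^ (n - A.card) : ℝ)
          * F A.card := by
    intro A _
    rw [Finset.sum_congr rfl (fun ω hω => by rw [(mem_filter.1 hω).2]), Finset.sum_const,
      fiber_count P n A]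
    push_cast; ring
  rw [Finset.sum_congr rfl hinner]
  rw [Finset.sum_powerset_apply_card
    (fun m => ((univ.filter P).card ^ m * (univ.filter fun s => ¬ P s).card ^ (n - m) : ℝ) * F m)]
  simp only [card_univ, Fintype.card_fin, nsmul_eq_mul]
  exact Finset.sum_congr rfl fun m _ => by ring

lemma card_KSub (d k : ℕ) : Fintype.card (KSub d k) = d.choose k := by
  rw [Fintype.card_subtype]
  have : (univ : Finset (Finset (Fin d))).filter (fun S => S.card = k)
      = Finset.powersetCard k (univ : Finset (Fin d)) := by
    rw [Finset.powersetCard_eq_filter, Finset.powerset_univ]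
  rw [this, Finset.card_powersetCard, card_univ, Fintype.card_fin]

lemma card_KSub_mem (d k : ℕ) (hk : 1 ≤ k) (j : Fin d) :
    ((univ : Finset (KSub d k)).filter fun S => j ∈ S.1).card = (d-1).choose (k-1) := by
  classical
  have hpc := Finset.card_powersetCard (k-1) ((univ : Finset (Fin d)).erase j)
  rw [Finset.card_erase_of_mem (mem_univ j), card_univ, Fintype.card_fin] at hpc
  rw [← hpc]
  refine Finset.card_bij' (fun S _ => S.1.erase j)
      (fun A hA => (⟨insert j A, by
        have hA' := Finset.mem_powersetCard.1 hA
        rw [Finset.card_insert_of_notMem (fun hj => (Finset.mem_erase.1 (hA'.1 hj)).1 rfl), hA'.2]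
        omega⟩ : KSub d k)) ?_ ?_ ?_ ?_
  · intro S hS
    have hj : j ∈ S.1 := (mem_filter.1 hS).2
    rw [Finset.mem_powersetCard]
    refine ⟨fun a ha => Finset.mem_erase.2 ⟨(Finset.mem_erase.1 ha).1, mem_univ a⟩, ?_⟩
    rw [Finset.card_erase_of_mem hj, S.2]
  · intro A hA
    simp
  · intro S hS
    have hj : j ∈ S.1 := (mem_filter.1 hS).2
    exact Subtype.ext (by simp [Finset.insert_erase hj])
  · intro A hA
    have hA' := Finset.mem_powersetCard.1 hA
    have : j ∉ A := fun hj => (Finset.mem_erase.1 (hA'.1 hj)).1 rfl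
    simp [Finset.erase_insert this]

def gfun (n d k : ℕ) (T : ℕ → ℝ) (m : ℕ) : ℝ :=
  if 1 ≤ m then (1/(n:ℝ)) * (betaBar n d k T / T m) * m else 0
def bcoef (n : ℕ) (p : ℝ) (m : ℕ) : ℝ := (n.choose m : ℝ) * p ^ m * (1 - p) ^ (n - m)

lemma range_split (n : ℕ) : range (n+1) = insert 0 (Finset.Icc 1 n) := by
  ext m; simp [Finset.mem_range, Finset.mem_Icc]; omega

lemma zero_not_Icc (n : ℕ) : (0:ℕ) ∉ Finset.Icc 1 n := by simp

lemma bcoef_total (n : ℕ) (p : ℝ) : ∑ m ∈ range (n+1), bcoef n p m = 1 := by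
  have := add_pow p (1-p) n
  simp only [add_sub_cancel, one_pow] at this
  rw [show ∑ m ∈ range (n+1), bcoef n p m
      = ∑ m ∈ range (n+1), p ^ m * (1-p) ^ (n - m) * (n.choose m : ℝ) from
    Finset.sum_congr rfl fun m _ => by unfold bcoef; ring, ← this]

lemma key_sum (n d k : ℕ) (hn : 1 ≤ n) (hk : 1 ≤ k) (hkd : k < d) (T : ℕ → ℝ)
    (hT : ∀ m ∈ Finset.Icc 1 n, 0 < T m) :
    ∑ m ∈ range (n+1), bcoef n (pr d k) m * gfun n d k T m = 1 := by
  have hd : 1 ≤ d := le_of_lt (lt_of_le_of_lt hk hkd)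
  have hdR : (0:ℝ) < d := by exact_mod_cast hd
  have hp : 0 < pr d k := div_pos (by exact_mod_cast hk) hdR
  have hp1 : pr d k < 1 := (div_lt_one hdR).2 (by exact_mod_cast hkd)
  set p := pr d k with hpdef
  have hnR : (n:ℝ) ≠ 0 := Nat.cast_ne_zero.2 (by omega)
  rw [range_split, Finset.sum_insert (zero_not_Icc n)]
  have h0 : bcoef n p 0 * gfun n d k T 0 = 0 := by
    unfold gfun; rw [if_neg (by omega)]; ring
  rw [h0, zero_add]
  have hterm : ∀ m ∈ Finset.Icc 1 n, bcoef n p m * gfun n d k T m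
      = betaBar n d k T * ((p / T m) * (((n-1).choose (m-1)) : ℝ) * p^(m-1) * (1-p)^(n-m)) := by
    intro m hm
    obtain ⟨hm1, hmn⟩ := Finset.mem_Icc.1 hm
    have hch : ((n.choose m : ℝ)) * m = n * (((n-1).choose (m-1)) : ℝ) := by
      have h := Nat.add_one_mul_choose_eq (n-1) (m-1)
      have e1 : n-1+1 = n := by omega
      have e2 : m-1+1 = m := by omega
      rw [e1, e2] at h
      exact_mod_cast h.symm
    have hpm : p^m = p * p^(m-1) := by
      rw [← pow_succ']; congr 1; omega
    have hT0 : T m ≠ 0 := ne_of_gt (hT m hm)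
    unfold gfun bcoef
    rw [if_pos hm1, hpm]
    field_simp
    linear_combination ((1-p)^(n-m) * betaBar n d k T) * hch
  rw [Finset.sum_congr rfl hterm, ← Finset.mul_sum]
  have hS : 0 < ∑ m ∈ Finset.Icc 1 n,
      (p / T m) * (((n-1).choose (m-1)) : ℝ) * p^(m-1) * (1-p)^(n-m) := by
    apply Finset.sum_pos'
    · intro m hm
      exact mul_nonneg (mul_nonneg (mul_nonneg
        (le_of_lt (div_pos hp (hT m hm))) (Nat.cast_nonneg _))
        (pow_nonneg hp.le _)) (pow_nonneg (by linarith) _)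
    · refine ⟨1, Finset.mem_Icc.2 ⟨le_refl 1, hn⟩, ?_⟩
      have hT1 := hT 1 (Finset.mem_Icc.2 ⟨le_refl 1, hn⟩)
      simp only [Nat.sub_self, Nat.choose_zero_right, Nat.cast_one, pow_zero]
      have : 0 < (1-p)^(n-1) := pow_pos (by linarith) _
      have h2 : 0 < p / T 1 := div_pos hp hT1
      nlinarith
  unfold betaBar
  rw [← hpdef]
  exact inv_mul_cancel₀ (ne_of_gt hS)

lemma mse_eq (n d k : ℕ) (hn : 1 ≤ n) (hk : 1 ≤ k) (hkd : k < d) (x : Fin d → ℝ) (T : ℕ → ℝ) :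
    mseSpatial n d k (fun _ => x) T = (∑ j : Fin d, x j ^ 2) *
      ∑ m ∈ range (n+1), (n.choose m : ℝ) * pr d k ^ m * (1 - pr d k)^(n-m) *
        (gfun n d k T m - 1)^2 := by
  classical
  have hd : 1 ≤ d := le_of_lt (lt_of_le_of_lt hk hkd)
  have hnR : (n:ℝ) ≠ 0 := Nat.cast_ne_zero.2 (by omega)
  have hdR : (0:ℝ) < d := by exact_mod_cast hd
  set N := d.choose k with hN
  have hNpos : 0 < N := Nat.choose_pos (le_of_lt hkd)
  have hNR : (0:ℝ) < N := by exact_mod_cast hNpos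
  have hcardO : (Fintype.card (Omega n d k) : ℝ) = (N:ℝ)^n := by
    rw [Fintype.card_fun, card_KSub d k, Fintype.card_fin]; push_cast; ring
  have hsum : ∀ (ω : Omega n d k) (j : Fin d),
      ∑ i : Fin n, spars (fun _ => x) ω i j = (Mcount ω j : ℝ) * x j := by
    intro ω j
    unfold spars Mcount
    rw [Finset.sum_ite, Finset.sum_const, Finset.sum_const_zero, add_zero, nsmul_eq_mul]
  have hterm : ∀ (ω : Omega n d k) (j : Fin d),
      (spatialEst (fun _ => x) T ω j - (1/(n:ℝ)) * ∑ _i : Fin n, x j)^2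
        = x j ^ 2 * (gfun n d k T (Mcount ω j) - 1)^2 := by
    intro ω j
    have hm : (1/(n:ℝ)) * ∑ _i : Fin n, x j = x j := by
      rw [Finset.sum_const, card_univ, Fintype.card_fin, nsmul_eq_mul]
      field_simp
    unfold spatialEst gfun
    split_ifs with h
    · rw [hsum, hm]; ring
    · rw [hm]; ring
  unfold mseSpatial Exp
  rw [hcardO]
  have hnum : ∑ ω : Omega n d k,
      ∑ j : Fin d, (spatialEst (fun _ => x) T ω j - (1/(n:ℝ)) * ∑ _i : Fin n, x j)^2
      = ∑ j : Fin d, x j ^ 2 *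
          ∑ m ∈ range (n+1), (n.choose m : ℝ)
            * ((univ : Finset (KSub d k)).filter fun S => j ∈ S.1).card ^ m
            * ((univ : Finset (KSub d k)).filter fun S => ¬ j ∈ S.1).card ^ (n - m)
            * (gfun n d k T m - 1)^2 := by
    rw [Finset.sum_comm]
    refine Finset.sum_congr rfl fun j _ => ?_
    rw [Finset.sum_congr rfl fun ω _ => hterm ω j, ← Finset.mul_sum,
      ← sum_binom (fun S : KSub d k => j ∈ S.1) n (fun m => (gfun n d k T m - 1)^2)]
    simp only [Mcount]
  rw [hnum]
  -- now convert counts to probabilities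
  have hfilters : ∀ j : Fin d,
      (((univ : Finset (KSub d k)).filter fun S => j ∈ S.1).card : ℝ) = pr d k * N ∧
      (((univ : Finset (KSub d k)).filter fun S => ¬ j ∈ S.1).card : ℝ) = (1 - pr d k) * N := by
    intro j
    have hab : ((univ : Finset (KSub d k)).filter fun S => j ∈ S.1).card
        + ((univ : Finset (KSub d k)).filter fun S => ¬ j ∈ S.1).card = N := by
      rw [Finset.card_filter_add_card_filter_not, card_univ, card_KSub d k]
    have ha : ((univ : Finset (KSub d k)).filter fun S => j ∈ S.1).card = (d-1).choose (k-1) :=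
      card_KSub_mem d k hk j
    have hnat : d * (d-1).choose (k-1) = N * k := by
      have := Nat.add_one_mul_choose_eq (d-1) (k-1)
      have h1 : d-1+1 = d := by omega
      have h2 : k-1+1 = k := by omega
      rw [h1, h2] at this
      rw [this, hN]
    have haR : (((univ : Finset (KSub d k)).filter fun S => j ∈ S.1).card : ℝ) = pr d k * N := by
      rw [ha]
      unfold pr
      rw [div_mul_eq_mul_div, eq_div_iff (ne_of_gt hdR)]
      exact_mod_cast (by rw [mul_comm ((d-1).choose (k-1)) d, hnat]; ring)
    refine ⟨haR, ?_⟩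
    have : (((univ : Finset (KSub d k)).filter fun S => ¬ j ∈ S.1).card : ℝ)
        = N - pr d k * N := by
      rw [← haR]
      have hcast : ((((univ : Finset (KSub d k)).filter fun S => j ∈ S.1).card : ℝ)
          + (((univ : Finset (KSub d k)).filter fun S => ¬ j ∈ S.1).card : ℝ)) = N := by
        exact_mod_cast hab
      linarith
    rw [this]; ring
  have hfinal : ∀ j : Fin d, ∀ m ∈ range (n+1),
      ((n.choose m : ℝ)
            * ((univ : Finset (KSub d k)).filter fun S => j ∈ S.1).card ^ m
            * ((univ : Finset (KSub d k)).filter fun S => ¬ j ∈ S.1).card ^ (n - m)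
            * (gfun n d k T m - 1)^2) / (N:ℝ)^n
        = (n.choose m : ℝ) * pr d k ^ m * (1 - pr d k)^(n-m) * (gfun n d k T m - 1)^2 := by
    intro j m hm
    obtain ⟨h1, h2⟩ := hfilters j
    rw [h1, h2, mul_pow, mul_pow]
    have hmn : (N:ℝ)^m * (N:ℝ)^(n-m) = (N:ℝ)^n := by
      rw [← pow_add]
      congr 1
      have := Finset.mem_range.1 hm
      omega
    field_simp
    rw [← hmn]
    ring
  rw [Finset.sum_div]
  conv_rhs => rw [Finset.sum_mul]
  refine Finset.sum_congr rfl fun j _ => ?_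
  rw [mul_div_assoc, Finset.sum_div]
  congr 1
  exact Finset.sum_congr rfl fun m hm => hfinal j m hm

lemma expand_sq (n : ℕ) (p : ℝ) (f : ℕ → ℝ) (hf0 : f 0 = 0)
    (hfsum : ∑ m ∈ range (n+1), bcoef n p m * f m = 1) :
    ∑ m ∈ range (n+1), bcoef n p m * (f m - 1)^2
      = (∑ m ∈ Finset.Icc 1 n, bcoef n p m * f m ^ 2) - 1 := by
  have e1 : ∑ m ∈ range (n+1), bcoef n p m * (f m - 1)^2
      = (∑ m ∈ range (n+1), bcoef n p m * f m ^ 2)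
        - 2 * (∑ m ∈ range (n+1), bcoef n p m * f m)
        + ∑ m ∈ range (n+1), bcoef n p m := by
    rw [Finset.mul_sum, ← Finset.sum_sub_distrib, ← Finset.sum_add_distrib]
    exact Finset.sum_congr rfl fun m _ => by ring
  have e2 : ∑ m ∈ range (n+1), bcoef n p m * f m ^ 2
      = ∑ m ∈ Finset.Icc 1 n, bcoef n p m * f m ^ 2 := by
    rw [range_split, Finset.sum_insert (zero_not_Icc n), hf0]
    ring_nf
  rw [e1, e2, hfsum, bcoef_total]
  ring

lemma main_ineq (n : ℕ) (hn : 1 ≤ n) (p : ℝ) (hp : 0 < p) (hp1 : p < 1)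
    (g h : ℕ → ℝ) (hg0 : g 0 = 0) (hh0 : h 0 = 0)
    (hgsum : ∑ m ∈ range (n+1), bcoef n p m * g m = 1)
    (hhsum : ∑ m ∈ range (n+1), bcoef n p m * h m = 1)
    (c : ℝ) (hconst : ∀ m ∈ Finset.Icc 1 n, g m = c) :
    ∑ m ∈ range (n+1), bcoef n p m * (g m - 1)^2
      ≤ ∑ m ∈ range (n+1), bcoef n p m * (h m - 1)^2 := by
  have hb : ∀ m, 0 ≤ bcoef n p m := fun m =>
    mul_nonneg (mul_nonneg (Nat.cast_nonneg _) (pow_nonneg hp.le _))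
      (pow_nonneg (by linarith) _)
  set s1 := ∑ m ∈ Finset.Icc 1 n, bcoef n p m with hs1def
  have hb0 : bcoef n p 0 = (1-p)^n := by unfold bcoef; simp
  have hs1 : s1 = 1 - (1-p)^n := by
    have := bcoef_total n p
    rw [range_split, Finset.sum_insert (zero_not_Icc n), hb0] at this
    rw [hs1def]; linarith
  have hs1pos : 0 < s1 := by
    have : (1-p)^n < 1 := pow_lt_one₀ (by linarith) (by linarith) (by omega)
    rw [hs1]; linarith
  have hIccsum : ∀ f : ℕ → ℝ, f 0 = 0 →
      (∑ m ∈ range (n+1), bcoef n p m * f m = 1) →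
      ∑ m ∈ Finset.Icc 1 n, bcoef n p m * f m = 1 := by
    intro f hf0 hfs
    rw [range_split, Finset.sum_insert (zero_not_Icc n), hf0, mul_zero, zero_add] at hfs
    exact hfs
  -- value of c
  have hc : c * s1 = 1 := by
    have := hIccsum g hg0 hgsum
    rw [Finset.sum_congr rfl (fun m hm => by rw [hconst m hm])] at this
    rw [← Finset.sum_mul] at this
    rw [mul_comm] at this
    exact this
  have hcval : c = 1 / s1 := by
    field_simp at hc ⊢
    linarith
  -- Qg = 1/s1
  have hQg : ∑ m ∈ Finset.Icc 1 n, bcoef n p m * g m ^ 2 = 1 / s1 := by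
    rw [Finset.sum_congr rfl (fun m hm => by rw [hconst m hm]), ← Finset.sum_mul, hcval]
    field_simp
    rw [← hs1def]
  -- Cauchy-Schwarz for h
  have hCS : 1 ≤ s1 * ∑ m ∈ Finset.Icc 1 n, bcoef n p m * h m ^ 2 := by
    have key := Finset.sum_mul_sq_le_sq_mul_sq (Finset.Icc 1 n)
      (fun m => Real.sqrt (bcoef n p m)) (fun m => Real.sqrt (bcoef n p m) * h m)
    have e1 : ∑ m ∈ Finset.Icc 1 n,
        Real.sqrt (bcoef n p m) * (Real.sqrt (bcoef n p m) * h m)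
        = ∑ m ∈ Finset.Icc 1 n, bcoef n p m * h m := by
      refine Finset.sum_congr rfl fun m _ => ?_
      rw [← mul_assoc, Real.mul_self_sqrt (hb m)]
    have e2 : ∑ m ∈ Finset.Icc 1 n, Real.sqrt (bcoef n p m) ^ 2 = s1 := by
      refine Finset.sum_congr rfl fun m _ => Real.sq_sqrt (hb m)
    have e3 : ∑ m ∈ Finset.Icc 1 n, (Real.sqrt (bcoef n p m) * h m) ^ 2
        = ∑ m ∈ Finset.Icc 1 n, bcoef n p m * h m ^ 2 := by
      refine Finset.sum_congr rfl fun m _ => ?_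
      rw [mul_pow, Real.sq_sqrt (hb m)]
    rw [e1, e2, e3, hIccsum h hh0 hhsum, one_pow] at key
    exact key
  have hQh : 1 / s1 ≤ ∑ m ∈ Finset.Icc 1 n, bcoef n p m * h m ^ 2 := by
    rw [div_le_iff₀ hs1pos]
    calc 1 ≤ s1 * ∑ m ∈ Finset.Icc 1 n, bcoef n p m * h m ^ 2 := hCS
    _ = (∑ m ∈ Finset.Icc 1 n, bcoef n p m * h m ^ 2) * s1 := by ring
  rw [expand_sq n p g hg0 hgsum, expand_sq n p h hh0 hhsum, hQg]
  linarith

/-- Rand-k-Spatial(Max) is optimal for identical data: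
if all data vectors are identical and nonzero (`xᵢ = x ≠ 0` for all `i`, so
`R₂/R₁ = n − 1`), `n ≥ 2` and `1 ≤ k < d`, then the scaling function
`T(m) = m` minimizes the MSE within the Rand-k-Spatial family. -/
theorem spatial_max_optimal_identical (n d k : ℕ) (hn : 2 ≤ n) (hk : 1 ≤ k)
    (hkd : k < d) (x : Fin d → ℝ) (hx : x ≠ 0) :
    ∀ T : ℕ → ℝ, (∀ m ∈ Finset.Icc 1 n, 0 < T m) →
      mseSpatial n d k (fun _ => x) (fun m => (m : ℝ))
        ≤ mseSpatial n d k (fun _ => x) T := by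
  intro T hT
  have hn1 : 1 ≤ n := by omega
  have hd : 1 ≤ d := le_of_lt (lt_of_le_of_lt hk hkd)
  have hdR : (0:ℝ) < d := by exact_mod_cast hd
  have hp : 0 < pr d k := div_pos (by exact_mod_cast hk) hdR
  have hp1 : pr d k < 1 := (div_lt_one hdR).2 (by exact_mod_cast hkd)
  rw [mse_eq n d k hn1 hk hkd x (fun m => (m:ℝ)), mse_eq n d k hn1 hk hkd x T]
  have hTid : ∀ m ∈ Finset.Icc 1 n, (0:ℝ) < ((fun m => (m:ℝ)) m) := by
    intro m hm
    have := (Finset.mem_Icc.1 hm).1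
    show (0:ℝ) < (m:ℝ)
    exact_mod_cast Nat.lt_of_lt_of_le Nat.zero_lt_one this
  have hg0 : gfun n d k (fun m => (m:ℝ)) 0 = 0 := by unfold gfun; simp
  have hh0 : gfun n d k T 0 = 0 := by unfold gfun; simp
  have hgsum := key_sum n d k hn1 hk hkd (fun m => (m:ℝ)) hTid
  have hhsum := key_sum n d k hn1 hk hkd T hT
  have hconst : ∀ m ∈ Finset.Icc 1 n,
      gfun n d k (fun m => (m:ℝ)) m = betaBar n d k (fun m => (m:ℝ)) / n := by
    intro m hm
    obtain ⟨hm1, _⟩ := Finset.mem_Icc.1 hm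
    have hm0 : ((m:ℕ):ℝ) ≠ 0 := Nat.cast_ne_zero.2 (by omega)
    unfold gfun
    rw [if_pos hm1]
    field_simp
  have hmain := main_ineq n hn1 (pr d k) hp hp1
    (gfun n d k (fun m => (m:ℝ))) (gfun n d k T) hg0 hh0 hgsum hhsum
    (betaBar n d k (fun m => (m:ℝ)) / n) hconst
  simp only [bcoef] at hmain
  exact mul_le_mul_of_nonneg_left hmain
    (Finset.sum_nonneg fun j _ => sq_nonneg (x j))
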